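/- If α is an element of the ring Z[J⁻¹] of rationals whose denominators have prime factors only in a set J of primes, then the binomial coefficient C(α, n) = α(α-1)⋯(α-n+1)/n! also lies in Z[J⁻¹], for every natural number n. -/

import Mathlib

open Polynomial


lemma not_dvd_den_of_norm_le {p : ℕ} [hp : Fact p.Prime] {q : ℚ}
    (h : ‖(q : ℚ_[p])‖ ≤ 1) : ¬ p ∣ q.den := by
  intro hd
  rcases eq_or_ne q 0 with rfl | hq
  · simp at hd
    exact hp.out.one_lt.ne' hd
  · rw [Padic.eq_padicNorm, padicNorm.eq_zpow_of_nonzero hq] at h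
    have hnum : ¬ (p : ℤ) ∣ q.num := by
      intro hn
      have hpa : p ∣ q.num.natAbs := Int.ofNat_dvd_right.mp (Int.dvd_natAbs.mpr hn)
      have : p ∣ Nat.gcd q.num.natAbs q.den := Nat.dvd_gcd hpa hd
      rw [q.reduced] at this
      exact hp.out.one_lt.ne' (Nat.eq_one_of_dvd_one this)
    have hv : padicValRat p q ≤ -1 := by
      rw [padicValRat]
      have h1 : padicValInt p q.num = 0 := padicValInt.eq_zero_of_not_dvd hnum
      have h2 : 1 ≤ padicValNat p q.den :=
        one_le_padicValNat_of_dvd q.den_nz hd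
      omega
    have hp1 : (1 : ℚ) < p := by exact_mod_cast hp.out.one_lt
    have : (1 : ℚ) < (p : ℚ) ^ (-padicValRat p q) := by
      apply one_lt_zpow₀ hp1
      omega
    have : (1:ℝ) < ((p:ℚ) ^ (-padicValRat p q) : ℚ) := by exact_mod_cast this
    exact absurd h (not_le.mpr this)

lemma descPochhammer_smeval_eq_eval' {R : Type*} [CommRing R] (r : R) (n : ℕ) :
    (descPochhammer ℤ n).smeval r = (descPochhammer R n).eval r := by
  rw [Polynomial.descPochhammer_smeval_eq_ascPochhammer,
    Polynomial.ascPochhammer_smeval_eq_eval, ← descPochhammer_eval_eq_ascPochhammer]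


/-- If `α ∈ ℤ[J⁻¹]` (the subring of `ℚ` of rationals whose denominators
have prime factors only in the set `J` of primes), then the binomial coefficient
`C(α, n) = α(α-1)⋯(α-n+1)/n!` also lies in `ℤ[J⁻¹]`, for every natural number `n`. -/
theorem stmt0 (J : Set ℕ) (hJ : ∀ p ∈ J, Nat.Prime p) (α : ℚ)
    (hα : ∀ p : ℕ, Nat.Prime p → p ∣ α.den → p ∈ J) (n : ℕ) :
    ∀ p : ℕ, Nat.Prime p →
      p ∣ ((descPochhammer ℚ n).eval α / (n.factorial : ℚ)).den → p ∈ J := by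
  intro p hp hden
  by_contra hpJ
  haveI : Fact p.Prime := ⟨hp⟩
  have hpden : ¬ p ∣ α.den := fun h => hpJ (hα p hp h)
  refine absurd hden (not_dvd_den_of_norm_le ?_)
  have hα1 : ‖(α : ℚ_[p])‖ ≤ 1 := Padic.norm_rat_le_one hpden
  set x : ℤ_[p] := ⟨(α : ℚ_[p]), hα1⟩ with hxdef
  have h1 : (((descPochhammer ℚ n).eval α : ℚ) : ℚ_[p])
      = (descPochhammer ℚ_[p] n).eval ((α : ℚ_[p])) := by
    rw [← descPochhammer_map (Rat.castHom ℚ_[p]) n, eval_map]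
    exact (eval₂_at_apply (Rat.castHom ℚ_[p]) α).symm
  have h2 : (descPochhammer ℚ_[p] n).eval ((α : ℚ_[p]))
      = (((descPochhammer ℤ_[p] n).eval x : ℤ_[p]) : ℚ_[p]) := by
    rw [← descPochhammer_map (PadicInt.Coe.ringHom (p := p)) n, eval_map,
      show ((α : ℚ_[p])) = (PadicInt.Coe.ringHom (p := p) x) from rfl]
    exact ((eval₂_at_apply (PadicInt.Coe.ringHom (p := p)) x).trans rfl)
  have h3 : (descPochhammer ℤ_[p] n).eval x = (n.factorial : ℤ_[p]) * Ring.choose x n := by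
    rw [← descPochhammer_smeval_eq_eval', Ring.descPochhammer_eq_factorial_smul_choose,
      nsmul_eq_mul]
  have hnf : ((n.factorial : ℚ) : ℚ_[p]) = ((n.factorial : ℤ_[p]) : ℚ_[p]) := by push_cast; ring
  have hfne : ((n.factorial : ℕ) : ℚ_[p]) ≠ 0 :=
    Nat.cast_ne_zero.mpr n.factorial_ne_zero
  rw [Rat.cast_div, h1, h2, h3, norm_div, hnf]
  push_cast
  rw [norm_mul, div_le_one (norm_pos_iff.mpr hfne)]
  exact mul_le_of_le_one_right (norm_nonneg _)
    (by rw [PadicInt.padic_norm_e_of_padicInt]; exact PadicInt.norm_le_one _)
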